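/- arXiv:2605.21296 — 3 statements merged into one kernel-verified Lean document; each statement's English description precedes it below -/
import Mathlib

section
/- For m > 2, the function F(m) = log(m−2) − log(m−1) − log(1 − 1/((π²+1)(m−1))) + log(π²+1)/(m−2) is strictly positive; equivalently, (m−2)/(m−1) > (1 − 1/((π²+1)(m−1))) · (1/(π²+1))^{1/(m−2)} for all m > 2. -/
theorem stmt_4 (m : ℝ) (hm : 2 < m) :
    (1 - 1 / ((Real.pi ^ 2 + 1) * (m - 1))) * (1 / (Real.pi ^ 2 + 1)) ^ (1 / (m - 2))
      < (m - 2) / (m - 1) := by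
  set a : ℝ := Real.pi ^ 2 + 1 with ha_def
  have hpi : 0 < Real.pi := Real.pi_pos
  have ha : 1 < a := by nlinarith
  have ha0 : 0 < a := by linarith
  set t : ℝ := 1 / (m - 2) with ht_def
  have hm2 : 0 < m - 2 := by linarith
  have ht : 0 < t := by positivity
  -- log a > 1 - 1/a
  have hlog : 1 - 1 / a < Real.log a := by
    have h1 : Real.log (1 / a) < 1 / a - 1 :=
      Real.log_lt_sub_one_of_pos (by positivity) (by
        intro h
        have : a = 1 := by field_simp at h; linarith
        linarith)
    rw [Real.log_div one_ne_zero (ne_of_gt ha0), Real.log_one] at h1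
    linarith
  -- a^t > 1 + t * (1 - 1/a)
  have hkey : 1 + t * (1 - 1 / a) < a ^ t := by
    have h2 : t * Real.log a + 1 < Real.exp (t * Real.log a) := by
      apply Real.add_one_lt_exp
      have : 0 < Real.log a := Real.log_pos ha
      positivity
    rw [Real.rpow_def_of_pos ha0, mul_comm (Real.log a) t]
    nlinarith [mul_lt_mul_of_pos_left hlog ht]
  have hdpos : 0 < 1 + t * (1 - 1 / a) := by
    have : 0 < 1 - 1 / a := by
      have : 1 / a < 1 := by rw [div_lt_one ha0]; exact ha
      linarith
    nlinarith
  have hPpos : (0:ℝ) < a ^ t := Real.rpow_pos_of_pos ha0 t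
  -- (1/a)^t < 1 / (1 + t*(1-1/a))
  have hP : (1 / a) ^ t < 1 / (1 + t * (1 - 1 / a)) := by
    simp only [one_div] at hdpos hkey ⊢
    rw [Real.inv_rpow (le_of_lt ha0)]
    exact inv_strictAnti₀ hdpos hkey
  have hm1 : 1 < m - 1 := by linarith
  have hfac : 0 < 1 - 1 / (a * (m - 1)) := by
    have h3 : 1 < a * (m - 1) := by nlinarith
    have : 1 / (a * (m - 1)) < 1 := by rw [div_lt_one]; exact h3; linarith
    linarith
  have heq : (1 - 1 / (a * (m - 1))) * (1 / (1 + t * (1 - 1 / a))) = (m - 2) / (m - 1) := by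
    have h1 : m - 1 ≠ 0 := by linarith
    have h2 : m - 2 ≠ 0 := by linarith
    have h3 : a ≠ 0 := ha0.ne'
    have h4 : 1 + t * (1 - 1 / a) ≠ 0 := hdpos.ne'
    rw [ht_def] at h4 ⊢
    field_simp at h4 ⊢
    field_simp
    have h5 : a * (m - 2) + (a - 1) ≠ 0 := (by nlinarith : (0:ℝ) < a * (m - 2) + (a - 1)).ne'
    rw [div_eq_one_iff_eq h5]
    ring
  calc (1 - 1 / (a * (m - 1))) * (1 / a) ^ t
      < (1 - 1 / (a * (m - 1))) * (1 / (1 + t * (1 - 1 / a))) :=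
        mul_lt_mul_of_pos_left hP hfac
    _ = (m - 2) / (m - 1) := heq
end

section
/- For m > 2, the function F(m) = log(m−2) − log(m−1) − log(1 − 1/((π²+1)(m−1))) + log(π²+1)/(m−2) has derivative F'(m) = −log(π²+1)/(m−2)² + π²/((m−2)((π²+1)m − (π²+2))), and F'(m) < 0 for all m > 2. -/
noncomputable def F (m : ℝ) : ℝ :=
  Real.log (m - 2) - Real.log (m - 1) - Real.log (1 - 1 / ((Real.pi ^ 2 + 1) * (m - 1)))
    + Real.log (Real.pi ^ 2 + 1) / (m - 2)

lemma aux_deriv (a m : ℝ) (ha1 : 1 < a) (hm : 2 < m) :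
    deriv (fun x : ℝ => Real.log (x - 2) - Real.log (x - 1) - Real.log (1 - 1 / (a * (x - 1)))
      + Real.log a / (x - 2)) m
      = -Real.log a / (m - 2) ^ 2 + (a - 1) / ((m - 2) * (a * m - (a + 1)))
    ∧ -Real.log a / (m - 2) ^ 2 + (a - 1) / ((m - 2) * (a * m - (a + 1))) < 0 := by
  have h2 : m - 2 > 0 := by linarith
  have h1 : m - 1 > 0 := by linarith
  have ha0 : (0:ℝ) < a := by linarith
  have haM : a * (m - 1) > 1 := by nlinarith
  have haM0 : a * (m - 1) ≠ 0 := by nlinarith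
  have hq : a * m - (a + 1) > 0 := by nlinarith
  have hg : 1 - 1 / (a * (m - 1)) > 0 := by
    have : 1 / (a * (m - 1)) < 1 := by
      rw [div_lt_one (by nlinarith)]; exact haM
    linarith
  have hd1 : HasDerivAt (fun x : ℝ => Real.log (x - 2)) (1 / (m - 2)) m := by
    have := ((hasDerivAt_id m).sub_const 2).log (by linarith : m - 2 ≠ 0)
    simpa using this
  have hd2 : HasDerivAt (fun x : ℝ => Real.log (x - 1)) (1 / (m - 1)) m := by
    have := ((hasDerivAt_id m).sub_const 1).log (by linarith : m - 1 ≠ 0)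
    simpa using this
  have hd3inner : HasDerivAt (fun x : ℝ => 1 - 1 / (a * (x - 1)))
      (a / (a * (m - 1)) ^ 2) m := by
    have h : HasDerivAt (fun x : ℝ => a * (x - 1)) a m := by
      simpa using ((hasDerivAt_id m).sub_const 1).const_mul a
    have := (hasDerivAt_const m (1:ℝ)).sub (h.inv haM0)
    simpa [one_div, div_eq_mul_inv, Pi.sub_def, Pi.inv_def] using this
  have hd3 : HasDerivAt (fun x : ℝ => Real.log (1 - 1 / (a * (x - 1))))
      ((a / (a * (m - 1)) ^ 2) / (1 - 1 / (a * (m - 1)))) m :=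
    hd3inner.log (ne_of_gt hg)
  have hd4 : HasDerivAt (fun x : ℝ => Real.log a / (x - 2))
      (-(Real.log a) / (m - 2) ^ 2) m := by
    have h : HasDerivAt (fun x : ℝ => x - 2) 1 m := (hasDerivAt_id m).sub_const 2
    have := (hasDerivAt_const m (Real.log a)).div h (by linarith : m - 2 ≠ 0)
    simpa [Pi.div_def] using this
  have hF := (((hd1.sub hd2).sub hd3).add hd4).deriv
  have heq : deriv (fun x : ℝ => Real.log (x - 2) - Real.log (x - 1)
      - Real.log (1 - 1 / (a * (x - 1))) + Real.log a / (x - 2)) m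
      = -Real.log a / (m - 2) ^ 2 + (a - 1) / ((m - 2) * (a * m - (a + 1))) := by
    erw [hF]
    have hne1 : m - 2 ≠ 0 := by linarith
    have hne2 : m - 1 ≠ 0 := by linarith
    have hne3 : a * m - (a + 1) ≠ 0 := ne_of_gt hq
    have hne0 : a ≠ 0 := ne_of_gt ha0
    have hgeq : 1 - 1 / (a * (m - 1)) = (a * m - (a + 1)) / (a * (m - 1)) := by
      field_simp; ring
    rw [hgeq]
    have hne3' : m * a - (a + 1) ≠ 0 := by rw [mul_comm]; exact hne3
    field_simp
    ring
  refine ⟨heq, ?_⟩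
  have hlog : 1 - 1 / a < Real.log a := by
    have h := Real.log_lt_sub_one_of_pos (x := 1 / a) (by positivity)
      (by intro h; rw [div_eq_one_iff_eq (ne_of_gt ha0)] at h; linarith)
    rw [Real.log_div one_ne_zero (ne_of_gt ha0), Real.log_one] at h
    linarith
  have key : (a - 1) * (m - 2) < Real.log a * (a * m - (a + 1)) := by
    have e : (1 - 1 / a) * (a * m - (a + 1)) = (a - 1) * (a * m - (a + 1)) / a := by
      field_simp
    have hA : (a - 1) * (m - 2) < (1 - 1 / a) * (a * m - (a + 1)) := by
      rw [e, lt_div_iff₀ ha0]; nlinarith [sq_nonneg (a - 1)]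
    have hB : (1 - 1 / a) * (a * m - (a + 1)) < Real.log a * (a * m - (a + 1)) :=
      mul_lt_mul_of_pos_right hlog hq
    linarith
  have hden : (0:ℝ) < (m - 2) * (a * m - (a + 1)) := mul_pos h2 hq
  have h3 : (a - 1) / ((m - 2) * (a * m - (a + 1))) < Real.log a / (m - 2) ^ 2 := by
    rw [div_lt_div_iff₀ hden (by positivity)]
    nlinarith [mul_lt_mul_of_pos_right key h2]
  rw [neg_div]
  linarith

theorem stmt_5 (m : ℝ) (hm : 2 < m) :
    deriv F m = -Real.log (Real.pi ^ 2 + 1) / (m - 2) ^ 2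
        + Real.pi ^ 2 / ((m - 2) * ((Real.pi ^ 2 + 1) * m - (Real.pi ^ 2 + 2)))
      ∧ deriv F m < 0 := by
  have ha1 : (1:ℝ) < Real.pi ^ 2 + 1 := by nlinarith [Real.pi_pos]
  obtain ⟨h1, h2⟩ := aux_deriv (Real.pi ^ 2 + 1) m ha1 hm
  have hFeq : F = fun x : ℝ => Real.log (x - 2) - Real.log (x - 1)
      - Real.log (1 - 1 / ((Real.pi ^ 2 + 1) * (x - 1)))
      + Real.log (Real.pi ^ 2 + 1) / (x - 2) := rfl
  have e1 : Real.pi ^ 2 + 1 - 1 = Real.pi ^ 2 := by ring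
  have e2 : (Real.pi ^ 2 + 1) + 1 = Real.pi ^ 2 + 2 := by ring
  rw [e1, e2] at h1 h2
  rw [hFeq]
  exact ⟨h1, h1 ▸ h2⟩
end

section
/- Let m > 2, χ > 0, λ = −((m−2)/(m−1)) χ^{1/(m−2)}, and define G_λ(c) = c² − 2∫_{−λ}^{c} ((m−1)χ(z+λ))^{1/(m−1)} dz for c ∈ [−λ, 1]. Then G_λ(−λ) ≤ G_λ(c) for all c ∈ (−λ, 1). -/
open intervalIntegral in
theorem stmt_11 (m χ : ℝ) (hm : 2 < m) (hχ : 0 < χ) :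
    let lam : ℝ := -((m - 2) / (m - 1)) * χ ^ (1 / (m - 2))
    let G : ℝ → ℝ := fun c =>
      c ^ 2 - 2 * ∫ z in (-lam)..c, ((m - 1) * χ * (z + lam)) ^ (1 / (m - 1))
    ∀ c ∈ Set.Ioo (-lam) 1, G (-lam) ≤ G c := by
  intro lam G c hc
  have hm1 : (1:ℝ) < m - 1 := by linarith
  have hm2 : (0:ℝ) < m - 2 := by linarith
  set p : ℝ := 1 / (m - 1) with hp
  have hp0 : 0 < p := by positivity
  have hp1 : p < 1 := by rw [hp, div_lt_one (by linarith)]; linarith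
  set t : ℝ := χ ^ ((m - 1) / (m - 2)) with ht
  have ht0 : 0 < t := Real.rpow_pos_of_pos hχ _
  have hχe : 0 < χ ^ (1 / (m - 2)) := Real.rpow_pos_of_pos hχ _
  have hlam : -lam = ((m - 2) / (m - 1)) * χ ^ (1 / (m - 2)) := by
    simp [lam]
  have hlam0 : 0 < -lam := by rw [hlam]; positivity
  -- t ^ (p - 1) = χ⁻¹
  have htp1 : t ^ (p - 1) = χ⁻¹ := by
    rw [ht, ← Real.rpow_mul hχ.le]
    have : (m - 1) / (m - 2) * (p - 1) = -1 := by
      rw [hp]; field_simp; ring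
    rw [this, Real.rpow_neg_one]
  -- t ^ p = χ ^ (1/(m-2))
  have htp : t ^ p = χ ^ (1 / (m - 2)) := by
    rw [ht, ← Real.rpow_mul hχ.le]
    congr 1
    rw [hp]; field_simp
  -- pointwise bound on [-lam, c]
  have key : ∀ z ∈ Set.Icc (-lam) c,
      ((m - 1) * χ * (z + lam)) ^ p ≤ z := by
    intro z hz
    have hz0 : 0 ≤ z + lam := by linarith [hz.1]
    set a : ℝ := (m - 1) * χ * (z + lam) with ha
    have ha0 : 0 ≤ a := by positivity
    rcases ha0.eq_or_lt with h0 | h0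
    · rw [← h0, Real.zero_rpow hp0.ne']
      linarith [hz.1, hlam0]
    · have amgm : a ^ p * t ^ (1 - p) ≤ p * a + (1 - p) * t :=
        Real.geom_mean_le_arith_mean2_weighted hp0.le (by linarith) h0.le ht0.le
          (by ring)
      have h1 : a ^ p = a ^ p * t ^ (1 - p) * t ^ (p - 1) := by
        rw [mul_assoc, ← Real.rpow_add ht0]
        norm_num
      have h2 : a ^ p ≤ (p * a + (1 - p) * t) * t ^ (p - 1) := by
        rw [h1]
        exact mul_le_mul_of_nonneg_right amgm (Real.rpow_nonneg ht0.le _)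
      have h3 : (p * a + (1 - p) * t) * t ^ (p - 1)
          = p * t ^ (p - 1) * a + (1 - p) * t ^ p := by
        have : t * t ^ (p - 1) = t ^ p := by
          nth_rewrite 1 [show t = t ^ (1:ℝ) from (Real.rpow_one t).symm]
          rw [← Real.rpow_add ht0]; ring_nf
        nlinarith [this]
      have h4 : p * t ^ (p - 1) * a = z + lam := by
        rw [htp1, ha, hp]
        field_simp
      have h5 : (1 - p) * t ^ p = -lam := by
        rw [htp, hlam, hp]
        congr 1
        field_simp; ring
      rw [h3, h4, h5] at h2
      linarith
  -- continuity / integrability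
  have hcont : Continuous fun z : ℝ => ((m - 1) * χ * (z + lam)) ^ p := by
    have h1 : Continuous fun x : ℝ => x ^ p :=
      continuous_iff_continuousAt.mpr fun x =>
        Real.continuousAt_rpow_const x p (Or.inr hp0.le)
    exact h1.comp (by continuity)
  have hint : IntervalIntegrable (fun z : ℝ => ((m - 1) * χ * (z + lam)) ^ p)
      MeasureTheory.volume (-lam) c := hcont.intervalIntegrable _ _
  have hmono : (∫ z in (-lam)..c, ((m - 1) * χ * (z + lam)) ^ p)
      ≤ ∫ z in (-lam)..c, z := by
    exact intervalIntegral.integral_mono_on hc.1.le hint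
      (continuous_id.intervalIntegrable _ _) key
  rw [integral_id] at hmono
  simp only [G, integral_same]
  nlinarith [hmono]
end
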